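/- arXiv:2206.00196 — 3 statements merged into one kernel-verified Lean document; each statement's English description precedes it below -/
import Mathlib

section
/- For every u ∈ H(Ω), ∫_Ω (K_H(x)∇u|∇u) dx = ∫_Ω q² (K_H(x)∇(u/q)|∇(u/q)) dx. -/
open MeasureTheory Real Filter Topology Set

noncomputable section

/-- The bilinear form `(K_H(x) a | b)` associated with the matrix
`K_H(x) = (k²+|x|²)⁻¹ [[k²+x₂², -x₁x₂],[-x₁x₂, k²+x₁²]]`. -/
def KHform (k : ℝ) (x a b : ℝ × ℝ) : ℝ :=
  (k ^ 2 + x.1 ^ 2 + x.2 ^ 2)⁻¹ *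
    ((k ^ 2 + x.2 ^ 2) * a.1 * b.1 - x.1 * x.2 * a.1 * b.2
      - x.1 * x.2 * a.2 * b.1 + (k ^ 2 + x.1 ^ 2) * a.2 * b.2)

/-- `K_H(x)` applied to a vector `a`. -/
def KHvec (k : ℝ) (x a : ℝ × ℝ) : ℝ × ℝ :=
  ((k ^ 2 + x.1 ^ 2 + x.2 ^ 2)⁻¹ * ((k ^ 2 + x.2 ^ 2) * a.1 - x.1 * x.2 * a.2),
   (k ^ 2 + x.1 ^ 2 + x.2 ^ 2)⁻¹ * (-(x.1 * x.2) * a.1 + (k ^ 2 + x.1 ^ 2) * a.2))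

/-- `det K_H(x) = k²/(k²+|x|²)`. -/
def detKH (k : ℝ) (x : ℝ × ℝ) : ℝ := k ^ 2 / (k ^ 2 + x.1 ^ 2 + x.2 ^ 2)

/-- Gradient of a scalar function on `ℝ²`. -/
def grad (u : ℝ × ℝ → ℝ) (x : ℝ × ℝ) : ℝ × ℝ :=
  (fderiv ℝ u x (1, 0), fderiv ℝ u x (0, 1))

/-- Divergence of a vector field on `ℝ²`. -/
def div2 (F : ℝ × ℝ → ℝ × ℝ) (x : ℝ × ℝ) : ℝ :=
  fderiv ℝ (fun y => (F y).1) x (1, 0) + fderiv ℝ (fun y => (F y).2) x (0, 1)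

/-- The operator `L_H u = -div (K_H(x) ∇u)`. -/
def LH (k : ℝ) (u : ℝ × ℝ → ℝ) (x : ℝ × ℝ) : ℝ :=
  - div2 (fun y => KHvec k y (grad u y)) x

/-- Positive part `t₊ = max (t, 0)`. -/
def pPart (t : ℝ) : ℝ := max t 0

/-- Clockwise rotation through `π/2`: `a^⊥`. -/
def perp2 (a : ℝ × ℝ) : ℝ × ℝ := (a.2, -a.1)

/-- Euclidean distance in the plane. -/
def dE (a b : ℝ × ℝ) : ℝ := Real.sqrt ((a.1 - b.1) ^ 2 + (a.2 - b.2) ^ 2)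

/-- Euclidean diameter of a planar set. -/
def diamE (S : Set (ℝ × ℝ)) : ℝ := sSup {d | ∃ a ∈ S, ∃ b ∈ S, d = dE a b}

/-- Euclidean distance between two planar sets. -/
def distE (A B : Set (ℝ × ℝ)) : ℝ := sInf {d | ∃ a ∈ A, ∃ b ∈ B, d = dE a b}

/-- The function `q² √(det K_H)`. -/
def Qfun (k : ℝ) (q : ℝ × ℝ → ℝ) (x : ℝ × ℝ) : ℝ := q x ^ 2 * Real.sqrt (detKH k x)

/-- Surrogate for membership in `H(Ω) = H¹₀(Ω)` (with equivalent norm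
`‖u‖² = ∫_Ω (K_H ∇u|∇u)`). -/
def MemH (k : ℝ) (Ω : Set (ℝ × ℝ)) (u : ℝ × ℝ → ℝ) : Prop :=
  ContinuousOn u (closure Ω) ∧ ContDiffOn ℝ 1 u Ω ∧ (∀ x ∈ frontier Ω, u x = 0) ∧
    IntegrableOn (fun x => KHform k x (grad u x) (grad u x)) Ω

/-- The energy functional `I_ε`. -/
def Ieps (k p ε : ℝ) (q : ℝ × ℝ → ℝ) (Ω : Set (ℝ × ℝ)) (u : ℝ × ℝ → ℝ) : ℝ :=
  (1 / 2) * (∫ x in Ω, KHform k x (grad u x) (grad u x))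
    - (1 / ((p + 1) * ε ^ 2)) * ∫ x in Ω, pPart (u x - q x * Real.log (1 / ε)) ^ (p + 1)

/-- The mountain pass value `c_ε = inf_{γ ∈ P_ε} max_{t ∈ [0,1]} I_ε(γ(t))`, where
`P_ε` is the collection of paths in `H(Ω)` (continuous for the `H`-norm) joining `0`
to a point with negative energy. -/
def ceps (k p : ℝ) (q : ℝ × ℝ → ℝ) (Ω : Set (ℝ × ℝ)) (ε : ℝ) : ℝ :=
  sInf {c | ∃ γ : ℝ → ℝ × ℝ → ℝ,
    (∀ t ∈ Icc (0:ℝ) 1, MemH k Ω (γ t)) ∧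
    (∀ t ∈ Icc (0:ℝ) 1, ∀ δ > 0, ∃ η > 0, ∀ s ∈ Icc (0:ℝ) 1, |s - t| < η →
      (∫ x in Ω, KHform k x (grad (fun y => γ s y - γ t y) x)
        (grad (fun y => γ s y - γ t y) x)) < δ) ∧
    γ 0 = (fun _ => 0) ∧ Ieps k p ε q Ω (γ 1) < 0 ∧
    c = sSup ((fun t => Ieps k p ε q Ω (γ t)) '' Icc (0:ℝ) 1)}

/-- The Nehari manifold `N_ε`. -/
def Nehari (k p ε : ℝ) (q : ℝ × ℝ → ℝ) (Ω : Set (ℝ × ℝ)) : Set (ℝ × ℝ → ℝ) :=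
  {u | MemH k Ω u ∧ ¬ Set.EqOn u 0 Ω ∧
    (∫ x in Ω, KHform k x (grad u x) (grad u x))
      = (1 / ε ^ 2) * ∫ x in Ω, pPart (u x - q x * Real.log (1 / ε)) ^ p * u x}

/-- `u` is a (classical) solution of `L_H u = ε⁻²(u - q ln(1/ε))₊ᵖ` in `Ω`, `u = 0` on `∂Ω`. -/
def IsSolution (k p ε : ℝ) (q : ℝ × ℝ → ℝ) (Ω : Set (ℝ × ℝ)) (u : ℝ × ℝ → ℝ) : Prop :=
  ContinuousOn u (closure Ω) ∧ ContDiffOn ℝ 2 u Ω ∧ (∀ x ∈ frontier Ω, u x = 0) ∧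
    ∀ x ∈ Ω, LH k u x = (1 / ε ^ 2) * pPart (u x - q x * Real.log (1 / ε)) ^ p

/-- `u` is a mountain pass solution: a solution at the mountain pass level `c_ε`. -/
def IsMPSolution (k p ε : ℝ) (q : ℝ × ℝ → ℝ) (Ω : Set (ℝ × ℝ)) (u : ℝ × ℝ → ℝ) : Prop :=
  IsSolution k p ε q Ω u ∧ MemH k Ω u ∧ Ieps k p ε q Ω u = ceps k p q Ω ε

/-- The vortex core `A_ε = {x ∈ Ω : u(x) > q(x) ln(1/ε)}`. -/
def vcore (q : ℝ × ℝ → ℝ) (Ω : Set (ℝ × ℝ)) (ε : ℝ) (u : ℝ × ℝ → ℝ) : Set (ℝ × ℝ) :=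
  {x ∈ Ω | q x * Real.log (1 / ε) < u x}

lemma Dpos {k : ℝ} (hk : 0 < k) (x : ℝ × ℝ) : 0 < k ^ 2 + x.1 ^ 2 + x.2 ^ 2 := by positivity

lemma KHform_vec_dot (k : ℝ) (x a b : ℝ × ℝ) :
    KHform k x a b = (KHvec k x a).1 * b.1 + (KHvec k x a).2 * b.2 := by
  simp only [KHform, KHvec]; ring

lemma KHform_abs_le {k : ℝ} (hk : 0 < k) (x a b : ℝ × ℝ) :
    |KHform k x a b| ≤ (|a.1| + |a.2|) * (|b.1| + |b.2|) := by
  have hD := Dpos hk x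
  set D := k ^ 2 + x.1 ^ 2 + x.2 ^ 2 with hDdef
  have h1 : (k ^ 2 + x.2 ^ 2) ≤ D := by nlinarith
  have h2 : |x.1 * x.2| ≤ D := by
    rw [abs_mul]; nlinarith [sq_nonneg (|x.1| - |x.2|), sq_abs x.1, sq_abs x.2, abs_nonneg x.1, abs_nonneg x.2]
  have h3 : (k ^ 2 + x.1 ^ 2) ≤ D := by nlinarith
  have key : |(k ^ 2 + x.2 ^ 2) * a.1 * b.1 - x.1 * x.2 * a.1 * b.2
      - x.1 * x.2 * a.2 * b.1 + (k ^ 2 + x.1 ^ 2) * a.2 * b.2|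
      ≤ D * ((|a.1| + |a.2|) * (|b.1| + |b.2|)) := by
    calc |(k ^ 2 + x.2 ^ 2) * a.1 * b.1 - x.1 * x.2 * a.1 * b.2
      - x.1 * x.2 * a.2 * b.1 + (k ^ 2 + x.1 ^ 2) * a.2 * b.2|
        ≤ |(k ^ 2 + x.2 ^ 2) * a.1 * b.1 - x.1 * x.2 * a.1 * b.2 - x.1 * x.2 * a.2 * b.1|
          + |(k ^ 2 + x.1 ^ 2) * a.2 * b.2| := abs_add_le _ _
      _ ≤ (|(k ^ 2 + x.2 ^ 2) * a.1 * b.1 - x.1 * x.2 * a.1 * b.2| + |x.1 * x.2 * a.2 * b.1|)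
          + |(k ^ 2 + x.1 ^ 2) * a.2 * b.2| := by gcongr; exact abs_sub _ _
      _ ≤ ((|(k ^ 2 + x.2 ^ 2) * a.1 * b.1| + |x.1 * x.2 * a.1 * b.2|) + |x.1 * x.2 * a.2 * b.1|)
          + |(k ^ 2 + x.1 ^ 2) * a.2 * b.2| := by gcongr; exact abs_sub _ _
      _ ≤ D * ((|a.1| + |a.2|) * (|b.1| + |b.2|)) := by
          simp only [abs_mul]
          rw [abs_of_pos (by nlinarith : (0:ℝ) < k ^ 2 + x.2 ^ 2),
            abs_of_pos (by nlinarith : (0:ℝ) < k ^ 2 + x.1 ^ 2)]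
          have h2' : |x.1| * |x.2| ≤ D := by rw [← abs_mul]; exact h2
          nlinarith [abs_nonneg a.1, abs_nonneg a.2, abs_nonneg b.1, abs_nonneg b.2,
            mul_nonneg (abs_nonneg a.1) (abs_nonneg b.1),
            mul_nonneg (abs_nonneg a.1) (abs_nonneg b.2),
            mul_nonneg (abs_nonneg a.2) (abs_nonneg b.1),
            mul_nonneg (abs_nonneg a.2) (abs_nonneg b.2)]
  rw [KHform, abs_mul, abs_inv, abs_of_pos hD]
  calc D⁻¹ * |_| ≤ D⁻¹ * (D * ((|a.1| + |a.2|) * (|b.1| + |b.2|))) := by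
        gcongr
    _ = (|a.1| + |a.2|) * (|b.1| + |b.2|) := by field_simp

lemma KHform_coercive {k : ℝ} (hk : 0 < k) (x a : ℝ × ℝ) :
    k ^ 2 / (k ^ 2 + x.1 ^ 2 + x.2 ^ 2) * (a.1 ^ 2 + a.2 ^ 2) ≤ KHform k x a a := by
  have hD := Dpos hk x
  rw [KHform, div_mul_eq_mul_div, div_le_iff₀ hD, inv_mul_eq_div, div_mul_eq_mul_div,
    le_div_iff₀ hD]
  nlinarith [sq_nonneg (x.2 * a.1 - x.1 * a.2), sq_nonneg a.1, sq_nonneg a.2]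


lemma hasDerivAt_maxsq (t : ℝ) : HasDerivAt (fun s => max s 0 ^ 2) (2 * max t 0) t := by
  rcases lt_trichotomy t 0 with ht | ht | ht
  · have h0 : (fun s : ℝ => max s 0 ^ 2) =ᶠ[𝓝 t] fun _ => (0:ℝ) := by
      filter_upwards [Iio_mem_nhds ht] with s hs
      simp [max_eq_right (le_of_lt (mem_Iio.mp hs))]
    have h1 : HasDerivAt (fun _ : ℝ => (0:ℝ)) 0 t := hasDerivAt_const t 0
    have h2 := h1.congr_of_eventuallyEq h0
    simpa [max_eq_right (le_of_lt ht)] using h2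
  · subst ht
    rw [hasDerivAt_iff_tendsto_slope]
    have hb : ∀ s : ℝ, ‖slope (fun s : ℝ => max s 0 ^ 2) 0 s‖ ≤ |s| := by
      intro s
      rw [slope_def_field]
      rcases le_or_gt s 0 with h | h
      · simp [max_eq_right h]
      · rw [max_eq_left h.le]
        simp only [max_eq_right le_rfl]
        rw [show s ^ 2 - 0 ^ 2 = s ^ 2 by ring, sub_zero, sq, mul_div_assoc,
          div_self (ne_of_gt h), mul_one]
        simp
    have hg : Tendsto (fun s : ℝ => |s|) (𝓝[≠] (0:ℝ)) (𝓝 0) := by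
      have : Tendsto (fun s : ℝ => |s|) (𝓝 (0:ℝ)) (𝓝 |0|) := continuous_abs.tendsto 0
      simpa using this.mono_left nhdsWithin_le_nhds
    have := squeeze_zero_norm hb hg
    simpa using this
  · have h0 : (fun s : ℝ => max s 0 ^ 2) =ᶠ[𝓝 t] fun s => s ^ 2 := by
      filter_upwards [Ioi_mem_nhds ht] with s hs
      simp [max_eq_left (le_of_lt (mem_Ioi.mp hs))]
    have h1 : HasDerivAt (fun s : ℝ => s ^ 2) (2 * t) t := by
      simpa [mul_comm] using (hasDerivAt_pow 2 t)
    have h2 := h1.congr_of_eventuallyEq h0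
    simpa [max_eq_left (le_of_lt ht)] using h2

def pcut (δ t : ℝ) : ℝ := max (t - δ) 0 ^ 2 + max (-t - δ) 0 ^ 2

def pcut' (δ t : ℝ) : ℝ := 2 * max (t - δ) 0 - 2 * max (-t - δ) 0

lemma hasDerivAt_pcut (δ t : ℝ) : HasDerivAt (pcut δ) (pcut' δ t) t := by
  have h1 : HasDerivAt (fun s : ℝ => max (s - δ) 0 ^ 2) (2 * max (t - δ) 0) t := by
    have := (hasDerivAt_maxsq (t - δ)).comp t ((hasDerivAt_id t).sub_const δ)
    simpa [Function.comp_def] using this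
  have h2 : HasDerivAt (fun s : ℝ => max (-s - δ) 0 ^ 2) (2 * max (-t - δ) 0 * (-1)) t := by
    have hin : HasDerivAt (fun s : ℝ => -s - δ) (-1) t := by
      simpa using ((hasDerivAt_id t).neg.sub_const δ)
    exact (hasDerivAt_maxsq (-t - δ)).comp t hin
  have := h1.add h2
  have heq : 2 * max (t - δ) 0 + 2 * max (-t - δ) 0 * (-1) = pcut' δ t := by
    unfold pcut'; ring
  rw [heq] at this
  exact this.congr_of_eventuallyEq (by filter_upwards with s; unfold pcut; rfl)

lemma contDiff_pcut (δ : ℝ) : ContDiff ℝ 1 (pcut δ) := by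
  rw [contDiff_one_iff_deriv]
  refine ⟨fun t => (hasDerivAt_pcut δ t).differentiableAt, ?_⟩
  have : deriv (pcut δ) = pcut' δ := funext fun t => (hasDerivAt_pcut δ t).deriv
  rw [this]; unfold pcut'; fun_prop

lemma pcut_nonneg (δ t : ℝ) : 0 ≤ pcut δ t := by unfold pcut; positivity

lemma pcut_le_sq {δ : ℝ} (hδ : 0 ≤ δ) (t : ℝ) : pcut δ t ≤ t ^ 2 := by
  unfold pcut
  rcases le_or_gt t 0 with h | h
  · rw [max_eq_right (by linarith : t - δ ≤ 0)]
    have hm0 : 0 ≤ max (-t - δ) 0 := le_max_right _ _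
    have hm1 : max (-t - δ) 0 ≤ -t := max_le (by linarith) (by linarith)
    nlinarith
  · rw [max_eq_right (by linarith : -t - δ ≤ 0)]
    have hm0 : 0 ≤ max (t - δ) 0 := le_max_right _ _
    have hm1 : max (t - δ) 0 ≤ t := max_le (by linarith) (by linarith)
    nlinarith

lemma abs_pcut'_le {δ : ℝ} (hδ : 0 ≤ δ) (t : ℝ) : |pcut' δ t| ≤ 2 * |t| := by
  unfold pcut'
  rcases le_or_gt t 0 with h | h
  · rw [max_eq_right (by linarith : t - δ ≤ 0)]
    have hm0 : 0 ≤ max (-t - δ) 0 := le_max_right _ _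
    have hm1 : max (-t - δ) 0 ≤ -t := max_le (by linarith) (by linarith)
    rw [abs_of_nonpos (by linarith), abs_of_nonpos h]
    linarith
  · rw [max_eq_right (by linarith : -t - δ ≤ 0)]
    have hm0 : 0 ≤ max (t - δ) 0 := le_max_right _ _
    have hm1 : max (t - δ) 0 ≤ t := max_le (by linarith) (by linarith)
    rw [abs_of_nonneg (by linarith), abs_of_pos h]
    linarith

lemma pcut_eq_zero {δ t : ℝ} (h : |t| < δ) : pcut δ t = 0 := by
  rw [abs_lt] at h
  unfold pcut
  rw [max_eq_right (by linarith), max_eq_right (by linarith)]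
  norm_num

lemma pcut'_eq_zero {δ t : ℝ} (h : |t| < δ) : pcut' δ t = 0 := by
  rw [abs_lt] at h
  unfold pcut'
  rw [max_eq_right (by linarith), max_eq_right (by linarith)]
  norm_num

lemma tendsto_pcut (t : ℝ) : Tendsto (fun n : ℕ => pcut (1 / (n + 1)) t) atTop (𝓝 (t ^ 2)) := by
  have hc : Continuous fun δ : ℝ => pcut δ t := by unfold pcut; fun_prop
  have h0 : pcut 0 t = t ^ 2 := by
    unfold pcut
    rcases le_or_gt t 0 with h | h
    · rw [max_eq_right (by linarith), max_eq_left (by linarith)]; ring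
    · rw [max_eq_left (by linarith), max_eq_right (by linarith)]; ring
  have hδ : Tendsto (fun n : ℕ => 1 / ((n : ℝ) + 1)) atTop (𝓝 0) :=
    tendsto_one_div_add_atTop_nhds_zero_nat
  have := (hc.tendsto 0).comp hδ
  rwa [h0] at this

lemma tendsto_pcut' (t : ℝ) : Tendsto (fun n : ℕ => pcut' (1 / (n + 1)) t) atTop (𝓝 (2 * t)) := by
  have hc : Continuous fun δ : ℝ => pcut' δ t := by unfold pcut'; fun_prop
  have h0 : pcut' 0 t = 2 * t := by
    unfold pcut'
    rcases le_or_gt t 0 with h | h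
    · rw [max_eq_right (by linarith), max_eq_left (by linarith)]; ring
    · rw [max_eq_left (by linarith), max_eq_right (by linarith)]; ring
  have hδ : Tendsto (fun n : ℕ => 1 / ((n : ℝ) + 1)) atTop (𝓝 0) :=
    tendsto_one_div_add_atTop_nhds_zero_nat
  have := (hc.tendsto 0).comp hδ
  rwa [h0] at this


/-- divergence theorem for compactly supported C¹ fields on the plane -/
lemma integral_div_eq_zero_of_compact_support
    (f g : ℝ × ℝ → ℝ) (f' g' : ℝ × ℝ → (ℝ × ℝ) →L[ℝ] ℝ)
    (hf : ∀ x, HasFDerivAt f (f' x) x) (hg : ∀ x, HasFDerivAt g (g' x) x)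
    (hcont : Continuous fun x => f' x (1, 0) + g' x (0, 1))
    (S : Set (ℝ × ℝ)) (hS : IsCompact S)
    (hfS : ∀ x ∉ S, f x = 0) (hgS : ∀ x ∉ S, g x = 0) :
    ∫ x : ℝ × ℝ, (f' x (1, 0) + g' x (0, 1)) = 0 := by
  -- choose R with S ⊆ ball 0 R
  obtain ⟨R, hR0, hSR⟩ : ∃ R > 0, S ⊆ Metric.ball (0 : ℝ × ℝ) R := by
    obtain ⟨r, hr⟩ := hS.isBounded.subset_ball (0 : ℝ × ℝ)
    exact ⟨max r 1 + 1, by positivity, hr.trans (Metric.ball_subset_ball (by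
      have := le_max_left r 1; linarith))⟩
  have hSc : IsClosed S := hS.isClosed
  -- derivative vanishes off S
  have hf'0 : ∀ x ∉ S, f' x = 0 := by
    intro x hx
    have h0 : f =ᶠ[𝓝 x] fun _ => (0:ℝ) := by
      filter_upwards [hSc.isOpen_compl.mem_nhds hx] with y hy
      exact hfS y hy
    exact ((hf x).congr_of_eventuallyEq h0.symm).unique (hasFDerivAt_const 0 x)
  have hg'0 : ∀ x ∉ S, g' x = 0 := by
    intro x hx
    have h0 : g =ᶠ[𝓝 x] fun _ => (0:ℝ) := by
      filter_upwards [hSc.isOpen_compl.mem_nhds hx] with y hy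
      exact hgS y hy
    exact ((hg x).congr_of_eventuallyEq h0.symm).unique (hasFDerivAt_const 0 x)
  set a : ℝ × ℝ := (-R, -R)
  set b : ℝ × ℝ := (R, R)
  have hab : a ≤ b := by constructor <;> simp [a, b] <;> linarith
  have hSIcc : S ⊆ Icc a b := by
    intro x hx
    have := hSR hx
    rw [Metric.mem_ball, dist_zero_right, Prod.norm_def] at this
    have h1 : |x.1| < R := lt_of_le_of_lt (le_max_left _ _) this
    have h2 : |x.2| < R := lt_of_le_of_lt (le_max_right _ _) this
    rw [abs_lt] at h1 h2
    exact ⟨⟨h1.1.le, h2.1.le⟩, ⟨h1.2.le, h2.2.le⟩⟩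
  -- divergence vanishes off S
  have hdiv0 : ∀ x ∉ S, f' x (1, 0) + g' x (0, 1) = 0 := by
    intro x hx
    rw [hf'0 x hx, hg'0 x hx]
    simp
  -- total integral = integral over Icc a b
  rw [← setIntegral_eq_integral_of_forall_compl_eq_zero
    (fun x hx => hdiv0 x (fun hxS => hx (hSIcc hxS)))]
  -- boundary values vanish
  have hbd : ∀ (t : ℝ) , f (R, t) = 0 ∧ f (-R, t) = 0 ∧ g (t, R) = 0 ∧ g (t, -R) = 0 := by
    intro t
    have h1 : ∀ y : ℝ × ℝ, R ≤ ‖y‖ → y ∉ S := by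
      intro y hy hyS
      exact absurd (hSR hyS) (by simp [Metric.mem_ball, dist_zero_right]; linarith)
    refine ⟨hfS _ (h1 _ ?_), hfS _ (h1 _ ?_), hgS _ (h1 _ ?_), hgS _ (h1 _ ?_)⟩ <;>
      · rw [Prod.norm_def]
        simp only [Real.norm_eq_abs]
        first
          | exact le_trans (by simp [abs_of_pos hR0]) (le_max_left |R| _)
          | exact le_trans (by simp [abs_of_pos hR0]) (le_max_left |(-R)| _)
          | exact le_trans (by simp [abs_of_pos hR0]) (le_max_right _ |R|)
          | exact le_trans (by simp [abs_of_pos hR0]) (le_max_right _ |(-R)|)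
  have hcf : Continuous f := continuous_iff_continuousAt.mpr fun x => (hf x).continuousAt
  have hcg : Continuous g := continuous_iff_continuousAt.mpr fun x => (hg x).continuousAt
  have key := integral_divergence_prod_Icc_of_hasFDerivAt_off_countable_of_le
    f g f' g' a b hab ∅ countable_empty hcf.continuousOn hcg.continuousOn
    (fun x _ => hf x) (fun x _ => hg x)
    (hcont.continuousOn.integrableOn_compact isCompact_Icc)
  rw [key]
  have e1 : (∫ x in a.1..b.1, g (x, b.2)) = 0 := by
    rw [intervalIntegral.integral_congr (g := fun _ => (0:ℝ))
      (fun x _ => (hbd x).2.2.1), intervalIntegral.integral_const]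
    simp
  have e2 : (∫ x in a.1..b.1, g (x, a.2)) = 0 := by
    rw [intervalIntegral.integral_congr (g := fun _ => (0:ℝ))
      (fun x _ => (hbd x).2.2.2), intervalIntegral.integral_const]
    simp
  have e3 : (∫ y in a.2..b.2, f (b.1, y)) = 0 := by
    rw [intervalIntegral.integral_congr (g := fun _ => (0:ℝ))
      (fun y _ => (hbd y).1), intervalIntegral.integral_const]
    simp
  have e4 : (∫ y in a.2..b.2, f (a.1, y)) = 0 := by
    rw [intervalIntegral.integral_congr (g := fun _ => (0:ℝ))
      (fun y _ => (hbd y).2.1), intervalIntegral.integral_const]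
    simp
  rw [e1, e2, e3, e4]
  ring


lemma exists_fderiv_bound {f : ℝ × ℝ → ℝ} {Ω : Set (ℝ × ℝ)}
    (hΩo : IsOpen Ω) (hΩb : Bornology.IsBounded Ω)
    (hf : ContDiffOn ℝ 1 f (closure Ω)) :
    ∃ C, 0 ≤ C ∧ ∀ x ∈ Ω, ‖fderiv ℝ f x‖ ≤ C := by
  rcases Set.eq_empty_or_nonempty Ω with h | hne
  · exact ⟨0, le_rfl, by simp [h]⟩
  have hK : IsCompact (closure Ω) :=
    Metric.isCompact_of_isClosed_isBounded isClosed_closure hΩb.closure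
  have hloc : ∀ x ∈ closure Ω, ∃ v : Set (ℝ × ℝ), IsOpen v ∧ x ∈ v ∧
      ∃ C, ∀ y ∈ Ω ∩ v, ‖fderiv ℝ f y‖ ≤ C := by
    intro x hx
    have hcd : ContDiffWithinAt ℝ 1 f (closure Ω) x := hf x hx
    rw [show ((1 : WithTop ℕ∞)) = ((1 : ℕ) : WithTop ℕ∞) by norm_cast] at hcd
    obtain ⟨u, hu, p, hp⟩ := contDiffWithinAt_nat.mp hcd
    rw [insert_eq_of_mem hx] at hu
    obtain ⟨w, hwo, hxw, hww⟩ := mem_nhdsWithin.mp hu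
    have hxu : x ∈ u := hww ⟨hxw, hx⟩
    have hcont : ContinuousOn (fun y => p y 1) u := hp.cont 1 le_rfl
    have hev : ∀ᶠ y in 𝓝[u] x, ‖p y 1‖ < ‖p x 1‖ + 1 := by
      have h1 : Tendsto (fun y => ‖p y 1‖) (𝓝[u] x) (𝓝 ‖p x 1‖) := (hcont x hxu).norm
      exact h1.eventually_lt_const (lt_add_one _)
    obtain ⟨w', hw'o, hxw', hw'sub⟩ := mem_nhdsWithin.mp hev
    refine ⟨w ∩ w', hwo.inter hw'o, ⟨hxw, hxw'⟩, ‖p x 1‖ + 1, ?_⟩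
    rintro y ⟨hyΩ, hyw, hyw'⟩
    have hyu : y ∈ u := hww ⟨hyw, subset_closure hyΩ⟩
    have hyb : ‖p y 1‖ ≤ ‖p x 1‖ + 1 := le_of_lt (hw'sub ⟨hyw', hyu⟩)
    have hunb : u ∈ 𝓝 y :=
      Filter.mem_of_superset ((hΩo.inter hwo).mem_nhds ⟨hyΩ, hyw⟩)
        (fun z hz => hww ⟨hz.2, subset_closure hz.1⟩)
    have hfd := hp.hasFDerivAt (by norm_cast) hunb
    rw [hfd.fderiv]
    calc ‖(continuousMultilinearCurryFin1 ℝ (ℝ × ℝ) ℝ) (p y 1)‖ = ‖p y 1‖ :=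
          LinearIsometryEquiv.norm_map _ _
      _ ≤ ‖p x 1‖ + 1 := hyb
  choose v hvo hxv C hC using hloc
  obtain ⟨t, htcov⟩ := hK.elim_nhds_subcover' (fun x hx => v x hx)
    (fun x hx => (hvo x hx).mem_nhds (hxv x hx))
  have htne : t.Nonempty := by
    by_contra hte
    rw [Finset.not_nonempty_iff_eq_empty] at hte
    obtain ⟨y, hy⟩ := hne
    have := htcov (subset_closure hy)
    simp [hte] at this
  set C₀ : ℝ := t.sup' htne (fun x => C x.1 x.2)
  refine ⟨max C₀ 0, le_max_right _ _, ?_⟩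
  intro y hy
  obtain ⟨x, hxt, hyv⟩ := mem_iUnion₂.mp (htcov (subset_closure hy))
  calc ‖fderiv ℝ f y‖ ≤ C x.1 x.2 := hC x.1 x.2 y ⟨hy, hyv⟩
    _ ≤ C₀ := Finset.le_sup' (f := fun x : {a // a ∈ closure Ω} => C x.1 x.2) hxt
    _ ≤ max C₀ 0 := le_max_left _ _

def Wd (δ : ℝ) (u q : ℝ × ℝ → ℝ) (x : ℝ × ℝ) : ℝ × ℝ :=
  (pcut' δ (u x) * fderiv ℝ u x (1, 0) / q x - pcut δ (u x) * fderiv ℝ q x (1, 0) / q x ^ 2,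
   pcut' δ (u x) * fderiv ℝ u x (0, 1) / q x - pcut δ (u x) * fderiv ℝ q x (0, 1) / q x ^ 2)

lemma zero_step (k : ℝ) (hk : 0 < k)
    (Ω : Set (ℝ × ℝ)) (hΩo : IsOpen Ω) (hΩb : Bornology.IsBounded Ω)
    (q : ℝ × ℝ → ℝ) (hq1 : ContDiffOn ℝ 2 q Ω)
    (hq3 : ∀ x ∈ closure Ω, 0 < q x) (hq4 : ∀ x ∈ Ω, LH k q x = 0)
    (u : ℝ × ℝ → ℝ) (hucont : ContinuousOn u (closure Ω))
    (hucd : ContDiffOn ℝ 1 u Ω) (hub : ∀ x ∈ frontier Ω, u x = 0)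
    (δ : ℝ) (hδ : 0 < δ) :
    ∫ x in Ω, KHform k x (grad q x) (Wd δ u q x) = 0 := by
  classical
  have hΩm : MeasurableSet Ω := hΩo.measurableSet
  have hΩK : Ω ⊆ closure Ω := subset_closure
  have hqpos : ∀ x ∈ Ω, 0 < q x := fun x hx => hq3 x (hΩK hx)
  have hqat : ∀ x ∈ Ω, ContDiffAt ℝ 2 q x := fun x hx => (hq1 x hx).contDiffAt (hΩo.mem_nhds hx)
  have huat : ∀ x ∈ Ω, ContDiffAt ℝ 1 u x := fun x hx => (hucd x hx).contDiffAt (hΩo.mem_nhds hx)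
  set V1 : ℝ × ℝ → ℝ := fun y => (KHvec k y (grad q y)).1 with hV1def
  set V2 : ℝ × ℝ → ℝ := fun y => (KHvec k y (grad q y)).2 with hV2def
  have hV1form : V1 = fun y => (k ^ 2 + y.1 ^ 2 + y.2 ^ 2)⁻¹ *
      ((k ^ 2 + y.2 ^ 2) * fderiv ℝ q y (1, 0) - y.1 * y.2 * fderiv ℝ q y (0, 1)) := rfl
  have hV2form : V2 = fun y => (k ^ 2 + y.1 ^ 2 + y.2 ^ 2)⁻¹ *
      (-(y.1 * y.2) * fderiv ℝ q y (1, 0) + (k ^ 2 + y.1 ^ 2) * fderiv ℝ q y (0, 1)) := rfl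
  have hdqat : ∀ x ∈ Ω, ContDiffAt ℝ 1 (fderiv ℝ q) x := fun x hx =>
    (hqat x hx).fderiv_right (by norm_num)
  have hdq1at : ∀ x ∈ Ω, ContDiffAt ℝ 1 (fun y => fderiv ℝ q y (1, 0)) x := fun x hx =>
    (hdqat x hx).clm_apply contDiffAt_const
  have hdq2at : ∀ x ∈ Ω, ContDiffAt ℝ 1 (fun y => fderiv ℝ q y (0, 1)) x := fun x hx =>
    (hdqat x hx).clm_apply contDiffAt_const
  have hDat : ∀ x : ℝ × ℝ, ContDiffAt ℝ 1 (fun y : ℝ × ℝ => (k ^ 2 + y.1 ^ 2 + y.2 ^ 2)⁻¹) x := by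
    intro x
    have h1 : ContDiffAt ℝ 1 (fun y : ℝ × ℝ => k ^ 2 + y.1 ^ 2 + y.2 ^ 2) x := by fun_prop
    exact h1.inv (Dpos hk x).ne'
  have hV1at : ∀ x ∈ Ω, ContDiffAt ℝ 1 V1 x := by
    intro x hx
    rw [hV1form]
    exact (hDat x).mul (((by fun_prop : ContDiffAt ℝ 1 (fun y : ℝ × ℝ => k ^ 2 + y.2 ^ 2) x).mul
      (hdq1at x hx)).sub (((by fun_prop : ContDiffAt ℝ 1 (fun y : ℝ × ℝ => y.1 * y.2) x)).mul
      (hdq2at x hx)))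
  have hV2at : ∀ x ∈ Ω, ContDiffAt ℝ 1 V2 x := by
    intro x hx
    rw [hV2form]
    exact (hDat x).mul (((by fun_prop : ContDiffAt ℝ 1 (fun y : ℝ × ℝ => -(y.1 * y.2)) x).mul
      (hdq1at x hx)).add (((by fun_prop : ContDiffAt ℝ 1 (fun y : ℝ × ℝ => k ^ 2 + y.1 ^ 2) x)).mul
      (hdq2at x hx)))
  have hdivV : ∀ x ∈ Ω, fderiv ℝ V1 x (1, 0) + fderiv ℝ V2 x (0, 1) = 0 := by
    intro x hx
    have h := hq4 x hx
    unfold LH div2 at h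
    rw [neg_eq_zero] at h
    exact h
  set φ : ℝ × ℝ → ℝ := fun y => pcut δ (u y) * (q y)⁻¹ with hφdef
  have hφat : ∀ x ∈ Ω, ContDiffAt ℝ 1 φ x := by
    intro x hx
    have h1 : ContDiffAt ℝ 1 (fun y => pcut δ (u y)) x :=
      (contDiff_pcut δ).comp_contDiffAt x (huat x hx)
    exact h1.mul ((((hqat x hx).of_le (by norm_num)).inv (hqpos x hx).ne'))
  set S : Set (ℝ × ℝ) := closure Ω ∩ u ⁻¹' (Iic (-δ) ∪ Ici δ) with hSdef
  have hScl : IsClosed S :=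
    hucont.preimage_isClosed_of_isClosed isClosed_closure (isClosed_Iic.union isClosed_Ici)
  have hKc : IsCompact (closure Ω) :=
    Metric.isCompact_of_isClosed_isBounded isClosed_closure hΩb.closure
  have hSc : IsCompact S := hKc.of_isClosed_subset hScl inter_subset_left
  have hSsub : S ⊆ Ω := by
    rintro x ⟨hxK, hxu⟩
    by_contra hxΩ
    have hfr : x ∈ frontier Ω := by
      rw [frontier, hΩo.interior_eq]
      exact ⟨hxK, hxΩ⟩
    have h0 := hub x hfr
    rcases hxu with h | h
    · rw [mem_Iic, h0] at h; linarith
    · rw [mem_Ici, h0] at h; linarith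
  have habs : ∀ x ∈ closure Ω, x ∉ S → |u x| < δ := by
    intro x hxK hxS
    by_contra hge
    push_neg at hge
    rcases le_abs.mp hge with h | h
    · exact hxS ⟨hxK, Or.inr h⟩
    · exact hxS ⟨hxK, Or.inl (by simpa [mem_Iic] using (by linarith : u x ≤ -δ))⟩
  set P1 : ℝ × ℝ → ℝ := fun y => V1 y * φ y with hP1def
  set P2 : ℝ × ℝ → ℝ := fun y => V2 y * φ y with hP2def
  set f : ℝ × ℝ → ℝ := Ω.indicator P1 with hfdef
  set g : ℝ × ℝ → ℝ := Ω.indicator P2 with hgdef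
  have hφ0 : ∀ x ∈ Ω, x ∉ S → φ x = 0 := by
    intro x hx hxS
    have := pcut_eq_zero (habs x (hΩK hx) hxS)
    rw [hφdef]
    simp [this]
  have hf0 : ∀ x, x ∉ S → f x = 0 := by
    intro x hxS
    by_cases hx : x ∈ Ω
    · rw [hfdef, indicator_of_mem hx, hP1def]
      simp [hφ0 x hx hxS]
    · rw [hfdef, indicator_of_notMem hx]
  have hg0 : ∀ x, x ∉ S → g x = 0 := by
    intro x hxS
    by_cases hx : x ∈ Ω
    · rw [hgdef, indicator_of_mem hx, hP2def]
      simp [hφ0 x hx hxS]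
    · rw [hgdef, indicator_of_notMem hx]
  have hfev : ∀ x ∈ Ω, f =ᶠ[𝓝 x] P1 := fun x hx =>
    eventually_of_mem (hΩo.mem_nhds hx) (fun y hy => indicator_of_mem hy _)
  have hgev : ∀ x ∈ Ω, g =ᶠ[𝓝 x] P2 := fun x hx =>
    eventually_of_mem (hΩo.mem_nhds hx) (fun y hy => indicator_of_mem hy _)
  have hfCD : ContDiff ℝ 1 f := by
    rw [contDiff_iff_contDiffAt]
    intro x
    by_cases hx : x ∈ Ω
    · exact ((hV1at x hx).mul (hφat x hx)).congr_of_eventuallyEq (hfev x hx)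
    · have hxS : x ∉ S := fun h => hx (hSsub h)
      have hev : f =ᶠ[𝓝 x] (fun _ => (0:ℝ)) :=
        eventually_of_mem (hScl.isOpen_compl.mem_nhds hxS) (fun y hy => hf0 y hy)
      exact contDiffAt_const.congr_of_eventuallyEq hev
  have hgCD : ContDiff ℝ 1 g := by
    rw [contDiff_iff_contDiffAt]
    intro x
    by_cases hx : x ∈ Ω
    · exact ((hV2at x hx).mul (hφat x hx)).congr_of_eventuallyEq (hgev x hx)
    · have hxS : x ∉ S := fun h => hx (hSsub h)
      have hev : g =ᶠ[𝓝 x] (fun _ => (0:ℝ)) :=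
        eventually_of_mem (hScl.isOpen_compl.mem_nhds hxS) (fun y hy => hg0 y hy)
      exact contDiffAt_const.congr_of_eventuallyEq hev
  have hfdiff : Differentiable ℝ f := hfCD.differentiable one_ne_zero
  have hgdiff : Differentiable ℝ g := hgCD.differentiable one_ne_zero
  have hcontdiv : Continuous fun x => fderiv ℝ f x (1, 0) + fderiv ℝ g x (0, 1) := by
    have h1 : Continuous fun x : ℝ × ℝ => fderiv ℝ f x ((1:ℝ), (0:ℝ)) :=
      (hfCD.continuous_fderiv_apply one_ne_zero).comp (continuous_id.prodMk continuous_const)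
    have h2 : Continuous fun x : ℝ × ℝ => fderiv ℝ g x ((0:ℝ), (1:ℝ)) :=
      (hgCD.continuous_fderiv_apply one_ne_zero).comp (continuous_id.prodMk continuous_const)
    exact h1.add h2
  have hmain := integral_div_eq_zero_of_compact_support f g (fderiv ℝ f) (fderiv ℝ g)
    (fun x => (hfdiff x).hasFDerivAt) (fun x => (hgdiff x).hasFDerivAt)
    hcontdiv S hSc hf0 hg0
  have hfderiv0 : ∀ x, x ∉ S → fderiv ℝ f x = 0 := by
    intro x hxS
    have hev : f =ᶠ[𝓝 x] (fun _ => (0:ℝ)) :=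
      eventually_of_mem (hScl.isOpen_compl.mem_nhds hxS) (fun y hy => hf0 y hy)
    rw [hev.fderiv_eq]
    exact fderiv_const_apply 0
  have hgderiv0 : ∀ x, x ∉ S → fderiv ℝ g x = 0 := by
    intro x hxS
    have hev : g =ᶠ[𝓝 x] (fun _ => (0:ℝ)) :=
      eventually_of_mem (hScl.isOpen_compl.mem_nhds hxS) (fun y hy => hg0 y hy)
    rw [hev.fderiv_eq]
    exact fderiv_const_apply 0
  have hres : ∫ x in Ω, (fderiv ℝ f x (1, 0) + fderiv ℝ g x (0, 1)) = 0 := by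
    rw [setIntegral_eq_integral_of_forall_compl_eq_zero (fun x hx => by
      have hxS : x ∉ S := fun h => hx (hSsub h)
      rw [hfderiv0 x hxS, hgderiv0 x hxS]
      simp)]
    exact hmain
  have hpt : ∀ x ∈ Ω, KHform k x (grad q x) (Wd δ u q x)
      = fderiv ℝ f x (1, 0) + fderiv ℝ g x (0, 1) := by
    intro x hx
    have hqx := hqpos x hx
    have hqne : q x ≠ 0 := hqx.ne'
    have hu' : HasFDerivAt u (fderiv ℝ u x) x :=
      ((huat x hx).differentiableAt one_ne_zero).hasFDerivAt
    have hq' : HasFDerivAt q (fderiv ℝ q x) x :=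
      ((hqat x hx).differentiableAt (by norm_num)).hasFDerivAt
    have h1 : HasFDerivAt (fun y => pcut δ (u y)) (pcut' δ (u x) • fderiv ℝ u x) x :=
      (hasDerivAt_pcut δ (u x)).comp_hasFDerivAt x hu'
    have h2 : HasFDerivAt (fun y => (q y)⁻¹) ((-(q x ^ 2)⁻¹) • fderiv ℝ q x) x :=
      (hasDerivAt_inv hqne).comp_hasFDerivAt x hq'
    have hφ' : HasFDerivAt φ (pcut δ (u x) • ((-(q x ^ 2)⁻¹) • fderiv ℝ q x)
        + (q x)⁻¹ • (pcut' δ (u x) • fderiv ℝ u x)) x := h1.mul h2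
    rw [(hfev x hx).fderiv_eq, (hgev x hx).fderiv_eq, hP1def, hP2def]
    rw [fderiv_fun_mul ((hV1at x hx).differentiableAt one_ne_zero) ((hφat x hx).differentiableAt one_ne_zero)]
    rw [fderiv_fun_mul ((hV2at x hx).differentiableAt one_ne_zero) ((hφat x hx).differentiableAt one_ne_zero)]
    rw [hφ'.fderiv]
    simp only [ContinuousLinearMap.add_apply, ContinuousLinearMap.coe_smul', Pi.smul_apply,
      smul_eq_mul]
    rw [KHform_vec_dot]
    have hdiv := hdivV x hx
    have e1 : (KHvec k x (grad q x)).1 = V1 x := rfl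
    have e2 : (KHvec k x (grad q x)).2 = V2 x := rfl
    rw [e1, e2]
    have hW1 : (Wd δ u q x).1 = pcut δ (u x) * (-(q x ^ 2)⁻¹ * fderiv ℝ q x (1, 0))
        + (q x)⁻¹ * (pcut' δ (u x) * fderiv ℝ u x (1, 0)) := by
      unfold Wd
      field_simp
      ring
    have hW2 : (Wd δ u q x).2 = pcut δ (u x) * (-(q x ^ 2)⁻¹ * fderiv ℝ q x (0, 1))
        + (q x)⁻¹ * (pcut' δ (u x) * fderiv ℝ u x (0, 1)) := by
      unfold Wd
      field_simp
      ring
    rw [hW1, hW2]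
    rw [hφdef]
    linear_combination (-(pcut δ (u x) * (q x)⁻¹)) * hdiv
  calc ∫ x in Ω, KHform k x (grad q x) (Wd δ u q x)
      = ∫ x in Ω, (fderiv ℝ f x (1, 0) + fderiv ℝ g x (0, 1)) :=
        setIntegral_congr_fun hΩm (fun x hx => hpt x hx)
    _ = 0 := hres
lemma pointwise_id {k : ℝ} (hk : 0 < k) (x : ℝ × ℝ) {a1 a2 b1 b2 ux qx : ℝ} (hq : qx ≠ 0) :
    qx ^ 2 * KHform k x ((a1 * qx - ux * b1) / qx ^ 2, (a2 * qx - ux * b2) / qx ^ 2)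
        ((a1 * qx - ux * b1) / qx ^ 2, (a2 * qx - ux * b2) / qx ^ 2)
      = KHform k x (a1, a2) (a1, a2)
        - KHform k x (b1, b2)
            (2 * ux * a1 / qx - ux ^ 2 * b1 / qx ^ 2, 2 * ux * a2 / qx - ux ^ 2 * b2 / qx ^ 2) := by
  have hD : k ^ 2 + x.1 ^ 2 + x.2 ^ 2 ≠ 0 := (Dpos hk x).ne'
  unfold KHform
  field_simp
  ring

lemma Wcomp_abs_bound {p p' a b qx c₀ Cu Cq : ℝ} (hqx : c₀ ≤ qx) (hc₀ : 0 < c₀)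
    (hp : |p| ≤ Cu ^ 2) (hp' : |p'| ≤ 2 * Cu) (hb : |b| ≤ Cq) (hCu : 0 ≤ Cu) (hCq : 0 ≤ Cq) :
    |p' * a / qx - p * b / qx ^ 2| ≤ 2 * Cu * |a| / c₀ + Cu ^ 2 * Cq / c₀ ^ 2 := by
  have hq0 : 0 < qx := lt_of_lt_of_le hc₀ hqx
  have h1 : |p' * a / qx| ≤ 2 * Cu * |a| / c₀ := by
    rw [abs_div, abs_mul, abs_of_pos hq0]
    gcongr
  have h2 : |p * b / qx ^ 2| ≤ Cu ^ 2 * Cq / c₀ ^ 2 := by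
    rw [abs_div, abs_mul, abs_of_pos (by positivity : (0:ℝ) < qx ^ 2)]
    gcongr <;> first | positivity | exact hqx | exact hp | exact hb
  calc |p' * a / qx - p * b / qx ^ 2| ≤ |p' * a / qx| + |p * b / qx ^ 2| := abs_sub _ _
    _ ≤ 2 * Cu * |a| / c₀ + Cu ^ 2 * Cq / c₀ ^ 2 := add_le_add h1 h2

lemma quot_rule_aux {ux qx a b : ℝ} (h : qx ≠ 0) :
    ux * (-(qx ^ 2)⁻¹ * b) + qx⁻¹ * a = (a * qx - ux * b) / qx ^ 2 := by
  field_simp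
  ring

set_option maxHeartbeats 2000000 in
/-- Lemma 2.5: for every `u ∈ H(Ω)`,
`∫_Ω (K_H ∇u|∇u) = ∫_Ω q² (K_H ∇(u/q)|∇(u/q))`, where `q > 0` is `L_H`-harmonic. -/
theorem statement4 (k : ℝ) (hk : 0 < k)
    (Ω : Set (ℝ × ℝ)) (hΩo : IsOpen Ω) (hΩc : IsConnected Ω)
    (hΩb : Bornology.IsBounded Ω) (hΩsc : SimplyConnectedSpace ↥Ω)
    (q : ℝ × ℝ → ℝ) (hq1 : ContDiffOn ℝ 2 q Ω) (hq2 : ContDiffOn ℝ 1 q (closure Ω))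
    (hq3 : ∀ x ∈ closure Ω, 0 < q x) (hq4 : ∀ x ∈ Ω, LH k q x = 0)
    (u : ℝ × ℝ → ℝ) (hu : MemH k Ω u) :
    (∫ x in Ω, KHform k x (grad u x) (grad u x))
      = ∫ x in Ω, q x ^ 2 *
          KHform k x (grad (fun y => u y / q y) x) (grad (fun y => u y / q y) x) := by
  classical
  rcases Set.eq_empty_or_nonempty Ω with hemp | hne
  · rw [hemp]; simp
  have hΩm : MeasurableSet Ω := hΩo.measurableSet
  have hΩK : Ω ⊆ closure Ω := subset_closure
  have hKc : IsCompact (closure Ω) :=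
    Metric.isCompact_of_isClosed_isBounded isClosed_closure hΩb.closure
  have hqpos : ∀ x ∈ Ω, 0 < q x := fun x hx => hq3 x (hΩK hx)
  -- lower bound for q
  obtain ⟨z, hzK, hzmin⟩ := hKc.exists_isMinOn hne.closure hq2.continuousOn
  set c₀ : ℝ := q z with hc₀def
  have hc₀pos : 0 < c₀ := hq3 z hzK
  have hc₀le : ∀ x ∈ closure Ω, c₀ ≤ q x := fun x hx => hzmin hx
  -- upper bound for u
  obtain ⟨Cu, hCub'⟩ := hKc.exists_bound_of_continuousOn hu.1
  have hCub : ∀ x ∈ closure Ω, |u x| ≤ Cu := fun x hx => hCub' x hx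
  have hCu0 : 0 ≤ Cu := le_trans (abs_nonneg _) (hCub z hzK)
  -- bound for grad q
  obtain ⟨Cq', hCq0', hCqb'⟩ := exists_fderiv_bound hΩo hΩb hq2
  set Cq : ℝ := Cq' + 1 with hCqdef
  have hCq0 : 0 ≤ Cq := by linarith
  have hnorm10 : ‖((1:ℝ), (0:ℝ))‖ = 1 := by rw [Prod.norm_def]; simp
  have hnorm01 : ‖((0:ℝ), (1:ℝ))‖ = 1 := by rw [Prod.norm_def]; simp
  have hdq1b : ∀ x ∈ Ω, |fderiv ℝ q x (1, 0)| ≤ Cq := by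
    intro x hx
    calc |fderiv ℝ q x (1, 0)| = ‖fderiv ℝ q x ((1:ℝ), (0:ℝ))‖ := rfl
      _ ≤ ‖fderiv ℝ q x‖ * ‖((1:ℝ), (0:ℝ))‖ := ContinuousLinearMap.le_opNorm _ _
      _ ≤ Cq' * 1 := by rw [hnorm10]; exact mul_le_mul_of_nonneg_right (hCqb' x hx) zero_le_one
      _ ≤ Cq := by rw [hCqdef]; linarith
  have hdq2b : ∀ x ∈ Ω, |fderiv ℝ q x (0, 1)| ≤ Cq := by
    intro x hx
    calc |fderiv ℝ q x (0, 1)| = ‖fderiv ℝ q x ((0:ℝ), (1:ℝ))‖ := rfl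
      _ ≤ ‖fderiv ℝ q x‖ * ‖((0:ℝ), (1:ℝ))‖ := ContinuousLinearMap.le_opNorm _ _
      _ ≤ Cq' * 1 := by rw [hnorm01]; exact mul_le_mul_of_nonneg_right (hCqb' x hx) zero_le_one
      _ ≤ Cq := by rw [hCqdef]; linarith
  -- pointwise differentiability
  have hqat : ∀ x ∈ Ω, ContDiffAt ℝ 2 q x := fun x hx => (hq1 x hx).contDiffAt (hΩo.mem_nhds hx)
  have huat : ∀ x ∈ Ω, ContDiffAt ℝ 1 u x := fun x hx =>
    (hu.2.1 x hx).contDiffAt (hΩo.mem_nhds hx)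
  -- continuity of derivatives on Ω
  have hcdu : ContinuousOn (fun x => fderiv ℝ u x) Ω :=
    hu.2.1.continuousOn_fderiv_of_isOpen hΩo le_rfl
  have hcdq : ContinuousOn (fun x => fderiv ℝ q x) Ω :=
    hq1.continuousOn_fderiv_of_isOpen hΩo (by norm_num)
  have hcdu1 : ContinuousOn (fun x => fderiv ℝ u x (1, 0)) Ω :=
    (ContinuousLinearMap.apply ℝ ℝ ((1:ℝ), (0:ℝ))).continuous.comp_continuousOn hcdu
  have hcdu2 : ContinuousOn (fun x => fderiv ℝ u x (0, 1)) Ω :=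
    (ContinuousLinearMap.apply ℝ ℝ ((0:ℝ), (1:ℝ))).continuous.comp_continuousOn hcdu
  have hcdq1 : ContinuousOn (fun x => fderiv ℝ q x (1, 0)) Ω :=
    (ContinuousLinearMap.apply ℝ ℝ ((1:ℝ), (0:ℝ))).continuous.comp_continuousOn hcdq
  have hcdq2 : ContinuousOn (fun x => fderiv ℝ q x (0, 1)) Ω :=
    (ContinuousLinearMap.apply ℝ ℝ ((0:ℝ), (1:ℝ))).continuous.comp_continuousOn hcdq
  have hcq : ContinuousOn q Ω := hq2.continuousOn.mono hΩK
  have hcu : ContinuousOn u Ω := hu.1.mono hΩK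
  -- coercivity constant
  obtain ⟨R, hRsub⟩ := (Metric.isBounded_iff_subset_closedBall 0).mp hΩb
  set cc : ℝ := k ^ 2 / (k ^ 2 + 2 * R ^ 2) with hccdef
  have hccpos : 0 < cc := by
    apply div_pos (by positivity)
    nlinarith [sq_nonneg R, sq_nonneg k, hk]
  have hcoer : ∀ x ∈ Ω, fderiv ℝ u x (1, 0) ^ 2 + fderiv ℝ u x (0, 1) ^ 2
      ≤ cc⁻¹ * KHform k x (grad u x) (grad u x) := by
    intro x hx
    have h1 := KHform_coercive hk x (grad u x)
    have hx1 : |x.1| ≤ R := by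
      have := hRsub hx
      rw [Metric.mem_closedBall, dist_zero_right] at this
      calc |x.1| = ‖x.1‖ := rfl
        _ ≤ ‖x‖ := norm_fst_le x
        _ ≤ R := this
    have hx2 : |x.2| ≤ R := by
      have := hRsub hx
      rw [Metric.mem_closedBall, dist_zero_right] at this
      calc |x.2| = ‖x.2‖ := rfl
        _ ≤ ‖x‖ := norm_snd_le x
        _ ≤ R := this
    have hD : k ^ 2 + x.1 ^ 2 + x.2 ^ 2 ≤ k ^ 2 + 2 * R ^ 2 := by
      nlinarith [sq_abs x.1, sq_abs x.2, abs_nonneg x.1, abs_nonneg x.2]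
    have hcle : cc ≤ k ^ 2 / (k ^ 2 + x.1 ^ 2 + x.2 ^ 2) :=
      div_le_div_of_nonneg_left (by positivity) (Dpos hk x) hD
    have h2 : cc * (fderiv ℝ u x (1, 0) ^ 2 + fderiv ℝ u x (0, 1) ^ 2)
        ≤ KHform k x (grad u x) (grad u x) := by
      refine le_trans ?_ h1
      have hg1 : (grad u x).1 = fderiv ℝ u x (1, 0) := rfl
      have hg2 : (grad u x).2 = fderiv ℝ u x (0, 1) := rfl
      rw [hg1, hg2]
      exact mul_le_mul_of_nonneg_right hcle (by positivity)
    calc fderiv ℝ u x (1, 0) ^ 2 + fderiv ℝ u x (0, 1) ^ 2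
        = cc⁻¹ * (cc * (fderiv ℝ u x (1, 0) ^ 2 + fderiv ℝ u x (0, 1) ^ 2)) := by
          field_simp
      _ ≤ cc⁻¹ * KHform k x (grad u x) (grad u x) := by
          exact mul_le_mul_of_nonneg_left h2 (by positivity)
  -- integrability of |du1| + |du2|
  have hKHuu : IntegrableOn (fun x => KHform k x (grad u x) (grad u x)) Ω := hu.2.2.2
  set gd : ℝ × ℝ → ℝ := fun x => |fderiv ℝ u x (1, 0)| + |fderiv ℝ u x (0, 1)| with hgddef
  have hgdcont : ContinuousOn gd Ω := (hcdu1.abs).add (hcdu2.abs)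
  have hgdmeas : AEStronglyMeasurable gd (volume.restrict Ω) :=
    hgdcont.aestronglyMeasurable hΩm
  have hμfin : volume Ω < ⊤ := hΩb.measure_lt_top
  have hgdint : IntegrableOn gd Ω := by
    refine Integrable.mono' (((integrableOn_const_iff (C := (1:ℝ))).mpr (Or.inr hμfin)).add
      (hKHuu.const_mul (2 * cc⁻¹))) hgdmeas ?_
    rw [ae_restrict_iff' hΩm]
    refine ae_of_all _ (fun x hx => ?_)
    have h := hcoer x hx
    have hgd0 : 0 ≤ gd x := by rw [hgddef]; positivity
    rw [Real.norm_eq_abs, abs_of_nonneg hgd0, hgddef]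
    have habs1 : |fderiv ℝ u x (1, 0)| ^ 2 = fderiv ℝ u x (1, 0) ^ 2 := sq_abs _
    have habs2 : |fderiv ℝ u x (0, 1)| ^ 2 = fderiv ℝ u x (0, 1) ^ 2 := sq_abs _
    have h1 := abs_nonneg (fderiv ℝ u x (1, 0))
    have h2 := abs_nonneg (fderiv ℝ u x (0, 1))
    simp only [Pi.add_apply]
    nlinarith [h, sq_nonneg (|fderiv ℝ u x (1, 0)| - |fderiv ℝ u x (0, 1)|),
      sq_nonneg (|fderiv ℝ u x (1, 0)| + |fderiv ℝ u x (0, 1)| - 1),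
      sq_nonneg (fderiv ℝ u x (1, 0)), sq_nonneg (fderiv ℝ u x (0, 1))]
  -- the limit field and integrands
  have hqne : ∀ x ∈ Ω, q x ≠ 0 := fun x hx => (hqpos x hx).ne'
  set Wlim : ℝ × ℝ → ℝ × ℝ := fun x =>
    (2 * u x * fderiv ℝ u x (1, 0) / q x - u x ^ 2 * fderiv ℝ q x (1, 0) / q x ^ 2,
     2 * u x * fderiv ℝ u x (0, 1) / q x - u x ^ 2 * fderiv ℝ q x (0, 1) / q x ^ 2) with hWlimdef
  set KQW : ℝ × ℝ → ℝ := fun x => KHform k x (grad q x) (Wlim x) with hKQWdef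
  set Fn : ℕ → ℝ × ℝ → ℝ := fun n x => KHform k x (grad q x) (Wd (1 / (n + 1)) u q x) with hFndef
  -- continuity helper
  have hKHcont : ∀ w : (ℝ × ℝ) → ℝ × ℝ, ContinuousOn (fun x => (w x).1) Ω →
      ContinuousOn (fun x => (w x).2) Ω →
      ContinuousOn (fun x => KHform k x (grad q x) (w x)) Ω := by
    intro w h1 h2
    have e : (fun x => KHform k x (grad q x) (w x)) = fun x =>
        (k ^ 2 + x.1 ^ 2 + x.2 ^ 2)⁻¹ *
          ((k ^ 2 + x.2 ^ 2) * fderiv ℝ q x (1, 0) * (w x).1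
            - x.1 * x.2 * fderiv ℝ q x (1, 0) * (w x).2
            - x.1 * x.2 * fderiv ℝ q x (0, 1) * (w x).1
            + (k ^ 2 + x.1 ^ 2) * fderiv ℝ q x (0, 1) * (w x).2) := rfl
    rw [e]
    have hinv : ContinuousOn (fun x : ℝ × ℝ => (k ^ 2 + x.1 ^ 2 + x.2 ^ 2)⁻¹) Ω :=
      ((by fun_prop : Continuous fun x : ℝ × ℝ => k ^ 2 + x.1 ^ 2 + x.2 ^ 2).continuousOn).inv₀
        (fun x _ => (Dpos hk x).ne')
    refine hinv.mul ?_
    refine ContinuousOn.add (ContinuousOn.sub (ContinuousOn.sub ?_ ?_) ?_) ?_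
    · exact (((by fun_prop : Continuous fun x : ℝ × ℝ => k ^ 2 + x.2 ^ 2).continuousOn).mul
        hcdq1).mul h1
    · exact (((by fun_prop : Continuous fun x : ℝ × ℝ => x.1 * x.2).continuousOn).mul
        hcdq1).mul h2
    · exact (((by fun_prop : Continuous fun x : ℝ × ℝ => x.1 * x.2).continuousOn).mul
        hcdq2).mul h1
    · exact (((by fun_prop : Continuous fun x : ℝ × ℝ => k ^ 2 + x.1 ^ 2).continuousOn).mul
        hcdq2).mul h2
  have hpcc : ∀ δ : ℝ, Continuous (pcut δ) := fun δ => (contDiff_pcut δ).continuous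
  have hpcc' : ∀ δ : ℝ, Continuous (pcut' δ) := by
    intro δ; unfold pcut'; fun_prop
  have hWdcont1 : ∀ δ : ℝ, ContinuousOn (fun x => (Wd δ u q x).1) Ω := by
    intro δ
    have e : (fun x => (Wd δ u q x).1) = fun x =>
        pcut' δ (u x) * fderiv ℝ u x (1, 0) / q x
          - pcut δ (u x) * fderiv ℝ q x (1, 0) / q x ^ 2 := rfl
    rw [e]
    exact ((((hpcc' δ).comp_continuousOn hcu).mul hcdu1).div hcq hqne).sub
      ((((hpcc δ).comp_continuousOn hcu).mul hcdq1).div (hcq.pow 2)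
        (fun x hx => pow_ne_zero 2 (hqne x hx)))
  have hWdcont2 : ∀ δ : ℝ, ContinuousOn (fun x => (Wd δ u q x).2) Ω := by
    intro δ
    have e : (fun x => (Wd δ u q x).2) = fun x =>
        pcut' δ (u x) * fderiv ℝ u x (0, 1) / q x
          - pcut δ (u x) * fderiv ℝ q x (0, 1) / q x ^ 2 := rfl
    rw [e]
    exact ((((hpcc' δ).comp_continuousOn hcu).mul hcdu2).div hcq hqne).sub
      ((((hpcc δ).comp_continuousOn hcu).mul hcdq2).div (hcq.pow 2)
        (fun x hx => pow_ne_zero 2 (hqne x hx)))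
  have hFnmeas : ∀ n : ℕ, AEStronglyMeasurable (Fn n) (volume.restrict Ω) := fun n =>
    (hKHcont _ (hWdcont1 _) (hWdcont2 _)).aestronglyMeasurable hΩm
  have hWlimcont1 : ContinuousOn (fun x => (Wlim x).1) Ω := by
    have e : (fun x => (Wlim x).1) = fun x =>
        2 * u x * fderiv ℝ u x (1, 0) / q x - u x ^ 2 * fderiv ℝ q x (1, 0) / q x ^ 2 := rfl
    rw [e]
    exact ((((continuous_const.continuousOn.mul hcu).mul hcdu1).div hcq hqne)).sub
      (((hcu.pow 2).mul hcdq1).div (hcq.pow 2) (fun x hx => pow_ne_zero 2 (hqne x hx)))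
  have hWlimcont2 : ContinuousOn (fun x => (Wlim x).2) Ω := by
    have e : (fun x => (Wlim x).2) = fun x =>
        2 * u x * fderiv ℝ u x (0, 1) / q x - u x ^ 2 * fderiv ℝ q x (0, 1) / q x ^ 2 := rfl
    rw [e]
    exact ((((continuous_const.continuousOn.mul hcu).mul hcdu2).div hcq hqne)).sub
      (((hcu.pow 2).mul hcdq2).div (hcq.pow 2) (fun x hx => pow_ne_zero 2 (hqne x hx)))
  have hKQWmeas : AEStronglyMeasurable KQW (volume.restrict Ω) :=
    (hKHcont _ hWlimcont1 hWlimcont2).aestronglyMeasurable hΩm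
  -- the dominating function
  set bound : ℝ × ℝ → ℝ := fun x =>
    (Cq + Cq) * ((2 * Cu * |fderiv ℝ u x (1, 0)| / c₀ + Cu ^ 2 * Cq / c₀ ^ 2)
      + (2 * Cu * |fderiv ℝ u x (0, 1)| / c₀ + Cu ^ 2 * Cq / c₀ ^ 2)) with hbounddef
  have hboundint : IntegrableOn bound Ω := by
    have e : bound = fun x => ((Cq + Cq) * (2 * Cu / c₀)) * gd x
        + (Cq + Cq) * (2 * (Cu ^ 2 * Cq / c₀ ^ 2)) := by
      funext x
      rw [hbounddef, hgddef]
      simp only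
      field_simp
      ring
    rw [e]
    exact (hgdint.const_mul _).add ((integrableOn_const_iff).mpr (Or.inr hμfin))
  -- generic bound for KHform with Wd-like fields
  have hKHbnd : ∀ x ∈ Ω, ∀ p p' : ℝ, |p| ≤ Cu ^ 2 → |p'| ≤ 2 * Cu →
      |KHform k x (grad q x)
        (p' * fderiv ℝ u x (1, 0) / q x - p * fderiv ℝ q x (1, 0) / q x ^ 2,
         p' * fderiv ℝ u x (0, 1) / q x - p * fderiv ℝ q x (0, 1) / q x ^ 2)| ≤ bound x := by
    intro x hx p p' hp hp'
    have hb1 := hdq1b x hx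
    have hb2 := hdq2b x hx
    have hq0 := hc₀le x (hΩK hx)
    have hw1 := Wcomp_abs_bound (a := fderiv ℝ u x (1, 0)) (b := fderiv ℝ q x (1, 0))
      hq0 hc₀pos hp hp' hb1 hCu0 hCq0
    have hw2 := Wcomp_abs_bound (a := fderiv ℝ u x (0, 1)) (b := fderiv ℝ q x (0, 1))
      hq0 hc₀pos hp hp' hb2 hCu0 hCq0
    have hKH := KHform_abs_le hk x (grad q x)
      (p' * fderiv ℝ u x (1, 0) / q x - p * fderiv ℝ q x (1, 0) / q x ^ 2,
       p' * fderiv ℝ u x (0, 1) / q x - p * fderiv ℝ q x (0, 1) / q x ^ 2)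
    have hg1 : |(grad q x).1| = |fderiv ℝ q x (1, 0)| := rfl
    have hg2 : |(grad q x).2| = |fderiv ℝ q x (0, 1)| := rfl
    refine le_trans hKH ?_
    rw [hbounddef]
    simp only
    rw [hg1, hg2]
    have hnn1 : (0:ℝ) ≤ 2 * Cu * |fderiv ℝ u x (1, 0)| / c₀ + Cu ^ 2 * Cq / c₀ ^ 2 := by
      positivity
    have hnn2 : (0:ℝ) ≤ 2 * Cu * |fderiv ℝ u x (0, 1)| / c₀ + Cu ^ 2 * Cq / c₀ ^ 2 := by
      positivity
    have habssum : |fderiv ℝ q x (1, 0)| + |fderiv ℝ q x (0, 1)| ≤ Cq + Cq := add_le_add hb1 hb2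
    exact mul_le_mul habssum (add_le_add hw1 hw2) (by positivity) (by linarith [hCq0])
  -- bound for Fn
  have hFnbound : ∀ n : ℕ, ∀ᵐ x ∂(volume.restrict Ω), ‖Fn n x‖ ≤ bound x := by
    intro n
    rw [ae_restrict_iff' hΩm]
    refine ae_of_all _ (fun x hx => ?_)
    rw [Real.norm_eq_abs]
    have hδpos : (0:ℝ) < 1 / (n + 1) := by positivity
    have hp : |pcut (1 / (n + 1)) (u x)| ≤ Cu ^ 2 := by
      rw [abs_of_nonneg (pcut_nonneg _ _)]
      calc pcut (1 / (n + 1)) (u x) ≤ u x ^ 2 := pcut_le_sq hδpos.le _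
        _ ≤ Cu ^ 2 := by
            rw [← sq_abs]
            exact pow_le_pow_left₀ (abs_nonneg _) (hCub x (hΩK hx)) 2
    have hp' : |pcut' (1 / (n + 1)) (u x)| ≤ 2 * Cu := by
      calc |pcut' (1 / (n + 1)) (u x)| ≤ 2 * |u x| := abs_pcut'_le hδpos.le _
        _ ≤ 2 * Cu := by linarith [hCub x (hΩK hx)]
    exact hKHbnd x hx _ _ hp hp'
  -- bound for KQW
  have hKQWbound : ∀ᵐ x ∂(volume.restrict Ω), ‖KQW x‖ ≤ bound x := by
    rw [ae_restrict_iff' hΩm]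
    refine ae_of_all _ (fun x hx => ?_)
    rw [Real.norm_eq_abs]
    have hp : |u x ^ 2| ≤ Cu ^ 2 := by
      rw [abs_of_nonneg (sq_nonneg _), ← sq_abs]
      exact pow_le_pow_left₀ (abs_nonneg _) (hCub x (hΩK hx)) 2
    have hp' : |2 * u x| ≤ 2 * Cu := by
      rw [abs_mul]
      simp only [Nat.abs_ofNat]
      linarith [hCub x (hΩK hx)]
    exact hKHbnd x hx _ _ hp hp'
  have hKQWint : IntegrableOn KQW Ω := Integrable.mono' hboundint hKQWmeas hKQWbound
  -- pointwise convergence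
  have hlim : ∀ᵐ x ∂(volume.restrict Ω), Tendsto (fun n => Fn n x) atTop (𝓝 (KQW x)) := by
    rw [ae_restrict_iff' hΩm]
    refine ae_of_all _ (fun x hx => ?_)
    have ht1 : Tendsto (fun n : ℕ => (Wd (1 / (n + 1)) u q x).1) atTop (𝓝 ((Wlim x).1)) := by
      have h1 := ((tendsto_pcut' (u x)).mul_const (fderiv ℝ u x (1, 0))).div_const (q x)
      have h2 := ((tendsto_pcut (u x)).mul_const (fderiv ℝ q x (1, 0))).div_const (q x ^ 2)
      exact h1.sub h2
    have ht2 : Tendsto (fun n : ℕ => (Wd (1 / (n + 1)) u q x).2) atTop (𝓝 ((Wlim x).2)) := by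
      have h1 := ((tendsto_pcut' (u x)).mul_const (fderiv ℝ u x (0, 1))).div_const (q x)
      have h2 := ((tendsto_pcut (u x)).mul_const (fderiv ℝ q x (0, 1))).div_const (q x ^ 2)
      exact h1.sub h2
    have hKHc : Continuous fun w : ℝ × ℝ => KHform k x (grad q x) w := by
      unfold KHform; fun_prop
    have := (hKHc.tendsto (Wlim x)).comp (ht1.prodMk_nhds ht2)
    exact this
  -- each Fn has zero integral
  have hFnzero : ∀ n : ℕ, ∫ x in Ω, Fn n x = 0 := fun n =>
    zero_step k hk Ω hΩo hΩb q hq1 hq3 hq4 u hu.1 hu.2.1 hu.2.2.1 _ (by positivity)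
  -- dominated convergence
  have hDCT := tendsto_integral_of_dominated_convergence bound hFnmeas hboundint hFnbound hlim
  have hKQWzero : ∫ x in Ω, KQW x = 0 := by
    have h2 : Tendsto (fun n : ℕ => ∫ x in Ω, Fn n x) atTop (𝓝 0) := by
      simp only [hFnzero]
      exact tendsto_const_nhds
    exact tendsto_nhds_unique hDCT h2
  -- gradient of u/q
  have hgradv : ∀ x ∈ Ω, grad (fun y => u y / q y) x =
      ((fderiv ℝ u x (1, 0) * q x - u x * fderiv ℝ q x (1, 0)) / q x ^ 2,
       (fderiv ℝ u x (0, 1) * q x - u x * fderiv ℝ q x (0, 1)) / q x ^ 2) := by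
    intro x hx
    have hqx := hqne x hx
    have hu' : HasFDerivAt u (fderiv ℝ u x) x := ((huat x hx).differentiableAt one_ne_zero).hasFDerivAt
    have hq' : HasFDerivAt q (fderiv ℝ q x) x :=
      ((hqat x hx).differentiableAt (by norm_num)).hasFDerivAt
    have h2 : HasFDerivAt (fun y => (q y)⁻¹) ((-(q x ^ 2)⁻¹) • fderiv ℝ q x) x :=
      (hasDerivAt_inv hqx).comp_hasFDerivAt x hq'
    have hv : HasFDerivAt (fun y => u y * (q y)⁻¹)
        (u x • ((-(q x ^ 2)⁻¹) • fderiv ℝ q x) + (q x)⁻¹ • fderiv ℝ u x) x := hu'.mul h2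
    have he : (fun y => u y / q y) = fun y => u y * (q y)⁻¹ := by
      funext y; rw [div_eq_mul_inv]
    rw [grad, he, hv.fderiv]
    simp only [ContinuousLinearMap.add_apply, ContinuousLinearMap.coe_smul', Pi.smul_apply,
      smul_eq_mul]
    rw [Prod.mk.injEq]
    exact ⟨quot_rule_aux hqx, quot_rule_aux hqx⟩
  -- the pointwise identity
  have hfinal : ∀ x ∈ Ω, q x ^ 2 *
      KHform k x (grad (fun y => u y / q y) x) (grad (fun y => u y / q y) x)
      = KHform k x (grad u x) (grad u x) - KQW x := by
    intro x hx
    rw [hgradv x hx]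
    have hid := pointwise_id hk x (a1 := fderiv ℝ u x (1, 0)) (a2 := fderiv ℝ u x (0, 1))
      (b1 := fderiv ℝ q x (1, 0)) (b2 := fderiv ℝ q x (0, 1)) (ux := u x) (qx := q x)
      (hqne x hx)
    have hgu : grad u x = (fderiv ℝ u x (1, 0), fderiv ℝ u x (0, 1)) := rfl
    have hgq : grad q x = (fderiv ℝ q x (1, 0), fderiv ℝ q x (0, 1)) := rfl
    have hKQWx : KQW x = KHform k x (fderiv ℝ q x (1, 0), fderiv ℝ q x (0, 1))
        (2 * u x * fderiv ℝ u x (1, 0) / q x - u x ^ 2 * fderiv ℝ q x (1, 0) / q x ^ 2,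
         2 * u x * fderiv ℝ u x (0, 1) / q x - u x ^ 2 * fderiv ℝ q x (0, 1) / q x ^ 2) := rfl
    rw [hgu, hKQWx]
    convert hid using 3 <;> ring
  -- conclusion
  have hRHS : ∫ x in Ω, q x ^ 2 *
      KHform k x (grad (fun y => u y / q y) x) (grad (fun y => u y / q y) x)
      = ∫ x in Ω, (KHform k x (grad u x) (grad u x) - KQW x) :=
    setIntegral_congr_fun hΩm (fun x hx => hfinal x hx)
  rw [hRHS, integral_sub hKHuu hKQWint, hKQWzero, sub_zero]
end
end

section
/- For every x̄ ∈ ℝ² and every y ∈ ℝ², K_H(R̄_{x̄} y) = R̄_{x̄} K_H(y) R̄_{x̄}ᵗ, where for x̄ = (|x̄|cos θ_{x̄}, |x̄|sin θ_{x̄}) the matrix R̄_{x̄} = [[cos θ_{x̄}, sin θ_{x̄}],[−sin θ_{x̄}, cos θ_{x̄}]] is the clockwise rotation through θ_{x̄}. -/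
open MeasureTheory Real Filter Topology Set Matrix

noncomputable section

/-- The matrix `K_H(x) = (k²+|x|²)⁻¹ [[k²+x₂², -x₁x₂],[-x₁x₂, k²+x₁²]]`. -/
def KHmat (k : ℝ) (x : ℝ × ℝ) : Matrix (Fin 2) (Fin 2) ℝ :=
  (k ^ 2 + x.1 ^ 2 + x.2 ^ 2)⁻¹ •
    !![k ^ 2 + x.2 ^ 2, -(x.1 * x.2); -(x.1 * x.2), k ^ 2 + x.1 ^ 2]

/-- The clockwise rotation matrix `R̄_θ`. -/
def Rmat (θ : ℝ) : Matrix (Fin 2) (Fin 2) ℝ :=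
  !![Real.cos θ, Real.sin θ; -Real.sin θ, Real.cos θ]

/-- The clockwise rotation through `θ` acting on `ℝ²`. -/
def rot2 (θ : ℝ) (x : ℝ × ℝ) : ℝ × ℝ :=
  (x.1 * Real.cos θ + x.2 * Real.sin θ, -x.1 * Real.sin θ + x.2 * Real.cos θ)

set_option maxHeartbeats 1000000 in
/-- Lemma 2.6: for every `x̄ ∈ ℝ²` with angle `θ` (i.e.
`x̄ = (|x̄| cos θ, |x̄| sin θ)`), one has `K_H(R̄_{x̄} y) = R̄_{x̄} K_H(y) R̄_{x̄}ᵀ`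
for all `y ∈ ℝ²`. -/
theorem statement6 (k : ℝ) (hk : 0 < k) (xbar : ℝ × ℝ) (θ : ℝ)
    (hθ : xbar = (Real.sqrt (xbar.1 ^ 2 + xbar.2 ^ 2) * Real.cos θ,
                  Real.sqrt (xbar.1 ^ 2 + xbar.2 ^ 2) * Real.sin θ)) :
    ∀ y : ℝ × ℝ, KHmat k (rot2 θ y) = Rmat θ * KHmat k y * (Rmat θ)ᵀ := by
  intro y
  have hpy : Real.sin θ ^ 2 + Real.cos θ ^ 2 = 1 := Real.sin_sq_add_cos_sq θ
  have hpos : k ^ 2 + y.1 ^ 2 + y.2 ^ 2 ≠ 0 := by positivity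
  have hd : k ^ 2 + (y.1 * Real.cos θ + y.2 * Real.sin θ) ^ 2
      + (-(y.1 * Real.sin θ) + y.2 * Real.cos θ) ^ 2 = k ^ 2 + y.1 ^ 2 + y.2 ^ 2 := by
    nlinarith [hpy]
  ext i j
  fin_cases i <;> fin_cases j <;>
    simp only [KHmat, Rmat, rot2, Matrix.mul_apply, Matrix.smul_apply, Matrix.transpose_apply,
      Fin.sum_univ_two, Matrix.cons_val', Matrix.cons_val_zero, Matrix.cons_val_one,
      Matrix.head_cons, Matrix.head_fin_const, Matrix.empty_val', Matrix.cons_val_fin_one,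
      smul_eq_mul, neg_mul, Matrix.of_apply, Fin.zero_eta, Fin.mk_one] <;>
    rw [hd] <;> field_simp <;>
    first
      | linear_combination (-(k ^ 2) * (k ^ 2 + y.1 ^ 2 + y.2 ^ 2) ^ 3) * hpy
      | linear_combination (-(k ^ 2)) * hpy
      | ring
end
end

section
/- For every x ∈ ℝ², the matrix K_H(x) is symmetric positive definite with eigenvalues λ₁ = 1 and λ₂ = k²/(k² + |x|²); consequently det K_H(x) = k²/(k² + |x|²) and for all ζ ∈ ℝ², (k²/(k²+|x|²))·|ζ|² ≤ (K_H(x)ζ|ζ) ≤ |ζ|². -/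
open MeasureTheory Real Filter Topology Set Matrix

noncomputable section

/-- properties (𝒦1)-(𝒦2): for every `x ∈ ℝ²`, `K_H(x)` is symmetric
positive definite with eigenvalues `λ₁ = 1` and `λ₂ = k²/(k²+|x|²)`; hence
`det K_H(x) = k²/(k²+|x|²)` and `(k²/(k²+|x|²)) |ζ|² ≤ (K_H(x)ζ|ζ) ≤ |ζ|²`. -/
theorem statement8 (k : ℝ) (hk : 0 < k) (x : ℝ × ℝ) :
    (KHmat k x)ᵀ = KHmat k x ∧
    (KHmat k x).PosDef ∧
    -- λ₁ = 1 is an eigenvalue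
    (∃ v : Fin 2 → ℝ, v ≠ 0 ∧ (KHmat k x).mulVec v = (1:ℝ) • v) ∧
    -- λ₂ = k²/(k²+|x|²) is an eigenvalue
    (∃ v : Fin 2 → ℝ, v ≠ 0 ∧
      (KHmat k x).mulVec v = (k ^ 2 / (k ^ 2 + x.1 ^ 2 + x.2 ^ 2)) • v) ∧
    (KHmat k x).det = k ^ 2 / (k ^ 2 + x.1 ^ 2 + x.2 ^ 2) ∧
    ∀ ζ : ℝ × ℝ,
      (k ^ 2 / (k ^ 2 + x.1 ^ 2 + x.2 ^ 2)) * (ζ.1 ^ 2 + ζ.2 ^ 2) ≤ KHform k x ζ ζ ∧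
      KHform k x ζ ζ ≤ ζ.1 ^ 2 + ζ.2 ^ 2 := by
  have hd : (0:ℝ) < k ^ 2 + x.1 ^ 2 + x.2 ^ 2 := by positivity
  have hdne : (k ^ 2 + x.1 ^ 2 + x.2 ^ 2) ≠ 0 := ne_of_gt hd
  have hsym : (KHmat k x)ᵀ = KHmat k x := by
    ext i j
    fin_cases i <;> fin_cases j <;> simp [KHmat]
  refine ⟨hsym, ?_, ?_, ?_, ?_, ?_⟩
  · refine Matrix.PosDef.of_dotProduct_mulVec_pos hsym fun v hv => ?_
    have hv' : v 0 ≠ 0 ∨ v 1 ≠ 0 := by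
      by_contra h
      push_neg at h
      apply hv
      funext i; fin_cases i <;> simp [h.1, h.2]
    have : star v ⬝ᵥ (KHmat k x).mulVec v =
        (k ^ 2 + x.1 ^ 2 + x.2 ^ 2)⁻¹ *
          (k ^ 2 * ((v 0) ^ 2 + (v 1) ^ 2) + (x.2 * v 0 - x.1 * v 1) ^ 2) := by
      simp [KHmat, Matrix.mulVec, dotProduct, Fin.sum_univ_two, Matrix.vecHead, Matrix.vecTail]
      field_simp
      ring
    rw [this]
    have hpos : 0 < k ^ 2 * ((v 0) ^ 2 + (v 1) ^ 2) + (x.2 * v 0 - x.1 * v 1) ^ 2 := by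
      rcases hv' with h | h
      · have : 0 < (v 0) ^ 2 := by positivity
        nlinarith [sq_nonneg (x.2 * v 0 - x.1 * v 1), sq_nonneg (v 1), mul_pos (pow_pos hk 2) this]
      · have : 0 < (v 1) ^ 2 := by positivity
        nlinarith [sq_nonneg (x.2 * v 0 - x.1 * v 1), sq_nonneg (v 0), mul_pos (pow_pos hk 2) this]
    positivity
  · by_cases hx : x.1 = 0 ∧ x.2 = 0
    · refine ⟨![1, 0], ?_, ?_⟩
      · intro h
        have := congrFun h 0
        simp at this
      · funext i
        fin_cases i <;>
          simp [KHmat, Matrix.mulVec, dotProduct, Fin.sum_univ_two, hx.1, hx.2, Matrix.vecHead, Matrix.vecTail] <;>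
          field_simp
    · refine ⟨![-x.2, x.1], ?_, ?_⟩
      · intro h
        rcases not_and_or.mp hx with h1 | h2
        · exact h1 (by simpa using congrFun h 1)
        · exact h2 (by have := congrFun h 0; simpa using this)
      · funext i
        fin_cases i <;>
          simp [KHmat, Matrix.mulVec, dotProduct, Fin.sum_univ_two, Matrix.vecHead, Matrix.vecTail] <;>
          field_simp <;> ring
  · by_cases hx : x.1 = 0 ∧ x.2 = 0
    · refine ⟨![1, 0], ?_, ?_⟩
      · intro h
        have := congrFun h 0
        simp at this
      · funext i
        fin_cases i <;>
          simp [KHmat, Matrix.mulVec, dotProduct, Fin.sum_univ_two, hx.1, hx.2, Matrix.vecHead, Matrix.vecTail] <;>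
          field_simp
    · refine ⟨![x.1, x.2], ?_, ?_⟩
      · intro h
        rcases not_and_or.mp hx with h1 | h2
        · exact h1 (by simpa using congrFun h 0)
        · exact h2 (by simpa using congrFun h 1)
      · funext i
        fin_cases i <;>
          simp [KHmat, Matrix.mulVec, dotProduct, Fin.sum_univ_two, Matrix.vecHead, Matrix.vecTail] <;>
          field_simp <;> ring
  · simp [KHmat, Matrix.det_fin_two, Matrix.smul_apply]
    field_simp
    ring
  · intro ζ
    constructor
    · rw [KHform, div_mul_eq_mul_div, div_le_iff₀ hd, ← sub_nonneg]
      have : (k ^ 2 + x.1 ^ 2 + x.2 ^ 2)⁻¹ *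
          ((k ^ 2 + x.2 ^ 2) * ζ.1 * ζ.1 - x.1 * x.2 * ζ.1 * ζ.2
            - x.1 * x.2 * ζ.2 * ζ.1 + (k ^ 2 + x.1 ^ 2) * ζ.2 * ζ.2) *
          (k ^ 2 + x.1 ^ 2 + x.2 ^ 2) - k ^ 2 * (ζ.1 ^ 2 + ζ.2 ^ 2) =
          (x.2 * ζ.1 - x.1 * ζ.2) ^ 2 := by
        field_simp
        ring
      rw [this]
      positivity
    · rw [KHform, ← sub_nonneg]
      have : ζ.1 ^ 2 + ζ.2 ^ 2 - (k ^ 2 + x.1 ^ 2 + x.2 ^ 2)⁻¹ *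
          ((k ^ 2 + x.2 ^ 2) * ζ.1 * ζ.1 - x.1 * x.2 * ζ.1 * ζ.2
            - x.1 * x.2 * ζ.2 * ζ.1 + (k ^ 2 + x.1 ^ 2) * ζ.2 * ζ.2) =
          (x.1 * ζ.1 + x.2 * ζ.2) ^ 2 / (k ^ 2 + x.1 ^ 2 + x.2 ^ 2) := by
        field_simp
        ring
      rw [this]
      positivity
end
end
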